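/- arXiv:2510.26133 — 2 statements merged into one kernel-verified Lean document; each statement's English description precedes it below -/
import Mathlib

section
/- Let m, n ≥ 1 and define v_n(z) = n(1 + z + ⋯ + z^{m-1}) + (n+1)(z^m + z^{m+1} + ⋯ + z^{m+n-1}). Then D_{σ,m-1}(v_n) = (n+1)² binom(m+n, m) - 2n - 1. -/
lemma aux1 (m : ℕ) (hm : 1 ≤ m) :
    ∑ k ∈ Finset.range m, k.choose (m - 1) = 1 := by
  rw [Finset.sum_eq_single_of_mem (m - 1)
    (Finset.mem_range.mpr (Nat.sub_lt hm one_pos))]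
  · simp
  · intro k hk hne
    have := Finset.mem_range.mp hk
    exact Nat.choose_eq_zero_of_lt (by omega)

lemma aux2 (m n : ℕ) (hm : 1 ≤ m) :
    ∑ k ∈ Finset.Ico m (m + n), k.choose (m - 1) + 1 = (m + n).choose m := by
  have h : Finset.Ico (m - 1) (m + n) = insert (m - 1) (Finset.Ico m (m + n)) := by
    ext k
    simp only [Finset.mem_Ico, Finset.mem_insert]
    omega
  have hs : ∑ k ∈ Finset.Ico (m - 1) (m + n), k.choose (m - 1) = (m + n).choose m := by
    have := Nat.sum_Icc_choose (m + n - 1) (m - 1)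
    rw [← Finset.Ico_add_one_right_eq_Icc] at this
    have e1 : m + n - 1 + 1 = m + n := by omega
    have e2 : m - 1 + 1 = m := by omega
    rw [e1, e2] at this
    exact this
  rw [h, Finset.sum_insert (by simp only [Finset.mem_Ico]; omega), Nat.choose_self] at hs
  omega

/-- For `vₙ(z) = n(1 + z + ⋯ + z^{m-1}) + (n+1)(z^m + ⋯ + z^{m+n-1})`,
one has `D_{σ,m-1}(vₙ) = (n+1)² C(m+n, m) - 2n - 1`. -/
theorem stmt3 (m n : ℕ) (hm : 1 ≤ m) (hn : 1 ≤ n) :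
    (∑ k ∈ Finset.range (m + n),
        (k.choose (m - 1) : ℝ) * (if k < m then (n : ℝ) else (n : ℝ) + 1) ^ 2) =
      ((n : ℝ) + 1) ^ 2 * ((m + n).choose m : ℝ) - 2 * n - 1 := by
  rw [← Finset.sum_range_add_sum_Ico _ (Nat.le_add_right m n)]
  have h1 : (∑ k ∈ Finset.range m,
      (k.choose (m - 1) : ℝ) * (if k < m then (n : ℝ) else (n : ℝ) + 1) ^ 2)
      = (n : ℝ) ^ 2 := by
    rw [Finset.sum_congr rfl (fun k hk => by
      rw [if_pos (Finset.mem_range.mp hk)]), ← Finset.sum_mul]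
    rw [show (∑ k ∈ Finset.range m, (k.choose (m-1) : ℝ)) = 1 by
      exact_mod_cast congrArg (Nat.cast (R := ℝ)) (aux1 m hm)]
    ring
  have h2 : (∑ k ∈ Finset.Ico m (m + n),
      (k.choose (m - 1) : ℝ) * (if k < m then (n : ℝ) else (n : ℝ) + 1) ^ 2)
      = (((m + n).choose m : ℝ) - 1) * ((n : ℝ) + 1) ^ 2 := by
    rw [Finset.sum_congr rfl (fun k hk => by
      rw [if_neg (by exact Nat.not_lt.mpr (Finset.mem_Ico.mp hk).1)]), ← Finset.sum_mul]
    congr 1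
    have := aux2 m n hm
    have : (∑ k ∈ Finset.Ico m (m + n), (k.choose (m-1) : ℝ)) + 1
        = ((m + n).choose m : ℝ) := by exact_mod_cast congrArg (Nat.cast (R := ℝ)) this
    linarith
  rw [h1, h2]
  ring
end

section
/- Let m, n ∈ ℕ with m ≥ 1, λ ∈ 𝕋, and let q(z) = Σ_{k=m+1}^{n+m+1} c_k z^k be a polynomial. Then D_{λ,m}(q) ≤ (n+1) binom(n+m+1, m) D_{σ,m}(q), where D_{σ,m}(q) = Σ_{k=m+1}^{n+m+1} |c_k|² binom(k,m). -/
set_option maxHeartbeats 1600000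

open MeasureTheory Metric Filter Set Real Polynomial intervalIntegral
open scoped ENNReal Real

/-- Polar coordinate change for Lebesgue (`lintegral`) integrals on `ℝ × ℝ`. -/
theorem lintegral_comp_polarCoord_symm' (g : ℝ × ℝ → ℝ≥0∞) :
    ∫⁻ p in polarCoord.target, ENNReal.ofReal p.1 * g (polarCoord.symm p) = ∫⁻ p, g p := by
  set B : ℝ × ℝ → ℝ × ℝ →L[ℝ] ℝ × ℝ := fun p =>
    LinearMap.toContinuousLinearMap (Matrix.toLin (Module.Basis.finTwoProd ℝ) (Module.Basis.finTwoProd ℝ)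
      !![Real.cos p.2, -p.1 * Real.sin p.2; Real.sin p.2, p.1 * Real.cos p.2])
  have A : ∀ p ∈ polarCoord.target, HasFDerivWithinAt polarCoord.symm (B p) polarCoord.target p :=
    fun p _ => (hasFDerivAt_polarCoord_symm p).hasFDerivWithinAt
  have B_det : ∀ p, (B p).det = p.1 := by
    intro p
    conv_rhs => rw [← one_mul p.1, ← cos_sq_add_sin_sq p.2]
    simp only [B, neg_mul, LinearMap.det_toContinuousLinearMap, LinearMap.det_toLin,
      Matrix.det_fin_two_of, sub_neg_eq_add]
    ring
  symm
  calc
    ∫⁻ p, g p = ∫⁻ p in polarCoord.source, g p := by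
      rw [← setLIntegral_univ]
      exact (setLIntegral_congr polarCoord_source_ae_eq_univ).symm
    _ = ∫⁻ p in polarCoord.symm '' polarCoord.target, g p := by
      rw [polarCoord.symm_image_target_eq_source]
    _ = ∫⁻ p in polarCoord.target, ENNReal.ofReal |(B p).det| * g (polarCoord.symm p) := by
      exact lintegral_image_eq_lintegral_abs_det_fderiv_mul volume
        polarCoord.open_target.measurableSet A polarCoord.symm.injOn g
    _ = ∫⁻ p in polarCoord.target, ENNReal.ofReal p.1 * g (polarCoord.symm p) := by
      refine setLIntegral_congr_fun polarCoord.open_target.measurableSet ?_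
      intro p hp
      dsimp only
      rw [B_det, abs_of_pos hp.1]

/-- Polar coordinate change for Lebesgue (`lintegral`) integrals on `ℂ`. -/
theorem Complex.lintegral_comp_polarCoord_symm'' (g : ℂ → ℝ≥0∞) :
    ∫⁻ p in polarCoord.target, ENNReal.ofReal p.1 * g (Complex.polarCoord.symm p) =
      ∫⁻ z, g z := by
  rw [← (Complex.volume_preserving_equiv_real_prod.symm).lintegral_comp_emb
    Complex.measurableEquivRealProd.symm.measurableEmbedding g, ← lintegral_comp_polarCoord_symm']
  rfl

lemma polarCoord_symm_eq_circleMap (r θ : ℝ) :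
    Complex.polarCoord.symm (r, θ) = circleMap 0 r θ := by
  rw [Complex.polarCoord_symm_apply, circleMap, Complex.exp_mul_I]
  push_cast
  ring

lemma poisson_re {lam z : ℂ} (hlam : ‖lam‖ = 1) (hz : z ≠ lam) :
    ((lam + z) / (lam - z)).re = (1 - ‖z‖ ^ 2) / ‖z - lam‖ ^ 2 := by
  have h1 : Complex.normSq lam = 1 := by
    rw [Complex.normSq_eq_norm_sq]; rw [hlam]; norm_num
  have h2 : ‖z - lam‖ ^ 2 = Complex.normSq (lam - z) := by
    rw [Complex.normSq_eq_norm_sq, norm_sub_rev]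
  have h3 : ‖z‖ ^ 2 = Complex.normSq z := by
    rw [Complex.normSq_eq_norm_sq]
  rw [Complex.div_re, h2, h3]
  rw [Complex.normSq_apply, Complex.normSq_apply] at *
  simp only [Complex.add_re, Complex.add_im, Complex.sub_re, Complex.sub_im]
  rw [← add_div]
  congr 1
  nlinarith [h1]

lemma poisson_integral {lam : ℂ} (hlam : ‖lam‖ = 1) {r : ℝ} (h0 : 0 < r) (h1 : r < 1) :
    ∫ θ in (0)..(2 * π), (1 - r ^ 2) / ‖circleMap 0 r θ - lam‖ ^ 2 = 2 * π := by
  set u : ℂ → ℂ := fun z => (lam + z) / (lam - z) with hu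
  have hne : ∀ z : ℂ, z ∈ closedBall (0 : ℂ) r → lam - z ≠ 0 := by
    intro z hz
    rw [sub_ne_zero]
    intro h
    rw [mem_closedBall, dist_zero_right, ← h, hlam] at hz
    linarith
  have hd : DifferentiableOn ℂ u (closedBall 0 r) := by
    apply DifferentiableOn.div
    · exact (differentiable_const _ |>.add differentiable_id).differentiableOn
    · exact (differentiable_const _ |>.sub differentiable_id).differentiableOn
    · exact hne
  have hC := hd.circleIntegral_sub_inv_smul (w := 0) (by simpa using h0)
  have hlam0 : lam ≠ 0 := by intro h; rw [h] at hlam; simp at hlam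
  have hu0 : u 0 = 1 := by simp [hu, div_self hlam0]
  rw [hu0, smul_eq_mul, mul_one] at hC
  rw [circleIntegral] at hC
  simp only [deriv_circleMap, smul_eq_mul, sub_zero] at hC
  have hcm : ∀ θ : ℝ, circleMap 0 r θ * Complex.I * ((circleMap 0 r θ)⁻¹ * u (circleMap 0 r θ))
      = Complex.I * u (circleMap 0 r θ) := by
    intro θ
    have : circleMap 0 r θ ≠ 0 := circleMap_ne_center h0.ne'
    field_simp
  rw [intervalIntegral.integral_congr (fun θ _ => hcm θ)] at hC
  rw [intervalIntegral.integral_const_mul] at hC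
  have hI : ∫ θ in (0)..(2 * π), u (circleMap 0 r θ) = 2 * π := by
    apply mul_left_cancel₀ Complex.I_ne_zero
    rw [hC]; push_cast; ring
  -- take real parts
  have hint : IntervalIntegrable (fun θ => u (circleMap 0 r θ)) volume 0 (2 * π) := by
    apply Continuous.intervalIntegrable
    apply Continuous.div
    · exact continuous_const.add (continuous_circleMap 0 r)
    · exact continuous_const.sub (continuous_circleMap 0 r)
    · intro θ
      apply hne
      simp [abs_of_pos h0, le_refl]
  have hre := Complex.reCLM.intervalIntegral_comp_comm hint
  rw [hI] at hre
  have hcongr : ∀ θ : ℝ, Complex.reCLM (u (circleMap 0 r θ))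
      = (1 - r ^ 2) / ‖circleMap 0 r θ - lam‖ ^ 2 := by
    intro θ
    have hn : ‖circleMap 0 r θ‖ = r := by simp [abs_of_pos h0]
    have hzl : circleMap 0 r θ ≠ lam := by
      intro h
      rw [h, hlam] at hn
      linarith
    rw [Complex.reCLM_apply, poisson_re hlam hzl, hn]
  rw [intervalIntegral.integral_congr (fun θ _ => hcongr θ)] at hre
  rw [hre]
  simp

lemma inner_theta {lam : ℂ} (hlam : ‖lam‖ = 1) {r : ℝ} (h0 : 0 < r) (h1 : r < 1) {m : ℕ}
    (hm : 1 ≤ m) :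
    ∫⁻ θ in Ioo (-π) π, ENNReal.ofReal ((1 - r ^ 2) ^ m / ‖circleMap 0 r θ - lam‖ ^ 2)
      = ENNReal.ofReal ((1 - r ^ 2) ^ (m - 1) * (2 * π)) := by
  have hr2 : (0:ℝ) ≤ 1 - r ^ 2 := by nlinarith
  set P : ℝ → ℝ := fun θ => (1 - r ^ 2) / ‖circleMap 0 r θ - lam‖ ^ 2 with hP
  have hPc : Continuous P := by
    apply Continuous.div continuous_const
    · exact ((continuous_circleMap 0 r).sub continuous_const).norm.pow 2
    · intro θ
      have hn : ‖circleMap 0 r θ‖ = r := by simp [abs_of_pos h0]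
      have hzl : circleMap 0 r θ ≠ lam := fun h => by rw [h, hlam] at hn; linarith
      have h0' : circleMap 0 r θ - lam ≠ 0 := sub_ne_zero.2 hzl
      exact pow_ne_zero 2 (norm_ne_zero_iff.2 h0')
  have hPnn : ∀ θ, 0 ≤ P θ := by
    intro θ
    apply div_nonneg hr2 (pow_nonneg (norm_nonneg _) 2)
  have hsplit : ∀ θ, (1 - r ^ 2) ^ m / ‖circleMap 0 r θ - lam‖ ^ 2
      = (1 - r ^ 2) ^ (m - 1) * P θ := by
    intro θ
    rw [hP]
    have hpow : (1 - r ^ 2) ^ m = (1 - r ^ 2) ^ (m - 1) * (1 - r ^ 2) := by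
      conv_lhs => rw [← Nat.succ_pred_eq_of_pos hm]
      rw [pow_succ, Nat.pred_eq_sub_one]
    rw [hpow]
    ring
  simp only [hsplit]
  have hc : (0:ℝ) ≤ (1 - r ^ 2) ^ (m - 1) := pow_nonneg hr2 _
  simp only [ENNReal.ofReal_mul hc]
  rw [lintegral_const_mul' _ _ ENNReal.ofReal_ne_top]
  have hInt : ∫⁻ θ in Ioo (-π) π, ENNReal.ofReal (P θ) = ENNReal.ofReal (2 * π) := by
    rw [← ofReal_integral_eq_lintegral_ofReal]
    · congr 1
      have hIoo : ∫ θ in Ioo (-π) π, P θ = ∫ θ in (-π)..π, P θ := by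
        rw [intervalIntegral.integral_of_le (by linarith [pi_pos] : -π ≤ π),
          integral_Ioc_eq_integral_Ioo]
      rw [hIoo]
      have hper : Function.Periodic P (2 * π) := by
        intro θ
        simp only [hP, periodic_circleMap 0 r θ]
      have h2 := hper.intervalIntegral_add_eq (-π) 0
      rw [show -π + 2 * π = π by ring] at h2
      rw [h2, zero_add, poisson_integral hlam h0 h1]
    · exact (hPc.continuousOn.integrableOn_compact isCompact_Icc).mono_set Ioo_subset_Icc_self
    · exact Filter.Eventually.of_forall hPnn
  rw [hInt, ← ENNReal.ofReal_mul hc]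

lemma key_integral {lam : ℂ} (hlam : ‖lam‖ = 1) {m : ℕ} (hm : 1 ≤ m) :
    ∫⁻ z in ball (0:ℂ) 1, ENNReal.ofReal ((1 - ‖z‖ ^ 2) ^ m / ‖z - lam‖ ^ 2)
      ≤ ENNReal.ofReal (π / m) := by
  have hπ := pi_pos
  set W : ℂ → ℝ := fun z => (1 - ‖z‖ ^ 2) ^ m / ‖z - lam‖ ^ 2 with hW
  have hWmeas : Measurable fun z : ℂ => ENNReal.ofReal (W z) := by
    apply ENNReal.measurable_ofReal.comp
    apply Measurable.div
    · exact ((measurable_const.sub (measurable_norm.pow measurable_const)).pow measurable_const)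
    · exact ((measurable_id.sub measurable_const).norm.pow measurable_const)
  set g : ℂ → ℝ≥0∞ := (ball (0:ℂ) 1).indicator (fun z => ENNReal.ofReal (W z)) with hg
  have hstep1 : ∫⁻ z in ball (0:ℂ) 1, ENNReal.ofReal (W z) = ∫⁻ z, g z := by
    rw [hg, lintegral_indicator measurableSet_ball]
  rw [hstep1, ← Complex.lintegral_comp_polarCoord_symm'' g]
  have htarget : (volume : Measure (ℝ × ℝ)).restrict polarCoord.target
      = (volume.restrict (Ioi (0:ℝ))).prod (volume.restrict (Ioo (-π) π)) := by
    rw [polarCoord_target, Measure.volume_eq_prod, Measure.prod_restrict]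
  rw [htarget]
  have hsymm : ∀ p : ℝ × ℝ, Complex.polarCoord.symm p = circleMap 0 p.1 p.2 := fun p => by
    rw [← polarCoord_symm_eq_circleMap p.1 p.2]
  have hgmeas : Measurable g := hWmeas.indicator measurableSet_ball
  have hcm : Continuous fun p : ℝ × ℝ => circleMap 0 p.1 p.2 := by
    simp only [circleMap, zero_add]
    fun_prop
  have hfmeas : Measurable fun p : ℝ × ℝ =>
      ENNReal.ofReal p.1 * g (Complex.polarCoord.symm p) := by
    simp only [hsymm]
    exact (ENNReal.measurable_ofReal.comp measurable_fst).mul (hgmeas.comp hcm.measurable)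
  rw [lintegral_prod _ hfmeas.aemeasurable]
  set F : ℝ → ℝ≥0∞ := (Ioo (0:ℝ) 1).indicator
    (fun r => ENNReal.ofReal (2 * π * r * (1 - r ^ 2) ^ (m - 1))) with hF
  have hpt : ∀ r : ℝ,
      (∫⁻ θ in Ioo (-π) π, ENNReal.ofReal (r, θ).1 * g (Complex.polarCoord.symm (r, θ)))
        ≤ F r := by
    intro r
    rcases le_or_gt r 0 with hr | hr
    · have : ENNReal.ofReal r = 0 := ENNReal.ofReal_eq_zero.2 hr
      simp only [this, zero_mul, lintegral_zero]
      exact zero_le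
    rcases lt_or_ge r 1 with hr1 | hr1
    · have hmem : ∀ θ : ℝ, circleMap 0 r θ ∈ ball (0:ℂ) 1 := by
        intro θ
        rw [mem_ball_zero_iff]
        simpa [abs_of_pos hr] using hr1
      have hval : ∀ θ : ℝ, ENNReal.ofReal (r, θ).1 * g (Complex.polarCoord.symm (r, θ))
          = ENNReal.ofReal r *
            ENNReal.ofReal ((1 - r ^ 2) ^ m / ‖circleMap 0 r θ - lam‖ ^ 2) := by
        intro θ
        rw [hsymm (r, θ)]
        congr 1
        rw [hg, indicator_of_mem (hmem θ), hW]
        congr 3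
        simp [abs_of_pos hr]
      apply le_of_eq
      calc (∫⁻ θ in Ioo (-π) π, ENNReal.ofReal (r, θ).1 * g (Complex.polarCoord.symm (r, θ)))
          = ∫⁻ θ in Ioo (-π) π, ENNReal.ofReal r *
              ENNReal.ofReal ((1 - r ^ 2) ^ m / ‖circleMap 0 r θ - lam‖ ^ 2) := by
            exact lintegral_congr fun θ => hval θ
        _ = ENNReal.ofReal r *
            ∫⁻ θ in Ioo (-π) π,
              ENNReal.ofReal ((1 - r ^ 2) ^ m / ‖circleMap 0 r θ - lam‖ ^ 2) :=
            lintegral_const_mul' _ _ ENNReal.ofReal_ne_top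
        _ = ENNReal.ofReal r * ENNReal.ofReal ((1 - r ^ 2) ^ (m - 1) * (2 * π)) := by
            rw [inner_theta hlam hr hr1 hm]
        _ = F r := by
            rw [← ENNReal.ofReal_mul hr.le, hF,
              indicator_of_mem (mem_Ioo.2 ⟨hr, hr1⟩)]
            congr 1
            ring
    · have hnotmem : ∀ θ : ℝ, circleMap 0 r θ ∉ ball (0:ℂ) 1 := by
        intro θ
        rw [mem_ball_zero_iff]
        push_neg
        simpa [abs_of_pos hr] using hr1
      have hval : ∀ θ : ℝ, ENNReal.ofReal (r, θ).1 * g (Complex.polarCoord.symm (r, θ)) = 0 := by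
        intro θ
        rw [hsymm (r, θ), hg, indicator_of_notMem (hnotmem θ), mul_zero]
      rw [lintegral_congr fun θ => hval θ]
      simp only [lintegral_zero]
      exact zero_le
  calc (∫⁻ r in Ioi (0:ℝ), ∫⁻ θ in Ioo (-π) π,
        ENNReal.ofReal (r, θ).1 * g (Complex.polarCoord.symm (r, θ)))
      ≤ ∫⁻ r in Ioi (0:ℝ), F r := lintegral_mono hpt
    _ ≤ ∫⁻ r, F r := setLIntegral_le_lintegral _ _
    _ = ∫⁻ r in Ioo (0:ℝ) 1, ENNReal.ofReal (2 * π * r * (1 - r ^ 2) ^ (m - 1)) := by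
        rw [hF, lintegral_indicator measurableSet_Ioo]
    _ = ENNReal.ofReal (∫ r in Ioo (0:ℝ) 1, 2 * π * r * (1 - r ^ 2) ^ (m - 1)) := by
        rw [← ofReal_integral_eq_lintegral_ofReal]
        · exact (((continuous_const.mul continuous_id).mul
            ((continuous_const.sub (continuous_pow 2)).pow
              (m - 1))).continuousOn.integrableOn_compact
                (isCompact_Icc (a := (0:ℝ)) (b := 1))).mono_set Ioo_subset_Icc_self
        · rw [Filter.EventuallyLE, ae_restrict_iff' measurableSet_Ioo]
          apply Filter.Eventually.of_forall
          intro r hr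
          have h2 : (0:ℝ) ≤ 1 - r ^ 2 := by nlinarith [hr.1, hr.2]
          have h1 : (0:ℝ) ≤ r := hr.1.le
          positivity
    _ ≤ ENNReal.ofReal (π / m) := by
        apply le_of_eq
        congr 1
        rw [← integral_Ioc_eq_integral_Ioo, ← intervalIntegral.integral_of_le zero_le_one]
        have hm0 : (m:ℝ) ≠ 0 := Nat.cast_ne_zero.2 (by omega)
        have hder : ∀ x ∈ uIcc (0:ℝ) 1, HasDerivAt (fun r : ℝ => -(π / m) * (1 - r ^ 2) ^ m)
            (2 * π * x * (1 - x ^ 2) ^ (m - 1)) x := by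
          intro x _
          have h1 : HasDerivAt (fun r : ℝ => 1 - r ^ 2) (-(2 * x)) x := by
            simpa using (hasDerivAt_pow 2 x).const_sub 1
          have h2 : HasDerivAt (fun r : ℝ => -(π / m) * (1 - r ^ 2) ^ m)
              (-(π / m) * (↑m * (1 - x ^ 2) ^ (m - 1) * -(2 * x))) x := (h1.pow m).const_mul (-(π / m))
          convert h2 using 1
          have hpow : (1 - x ^ 2) ^ m = (1 - x ^ 2) ^ (m - 1) * (1 - x ^ 2) := by
            conv_lhs => rw [← Nat.succ_pred_eq_of_pos hm]
            rw [pow_succ, Nat.pred_eq_sub_one]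
          field_simp
        have hint : IntervalIntegrable (fun x : ℝ => 2 * π * x * (1 - x ^ 2) ^ (m - 1))
            volume 0 1 := by
          exact ((continuous_const.mul continuous_id).mul
            ((continuous_const.sub (continuous_pow 2)).pow (m - 1))).intervalIntegrable 0 1
        rw [intervalIntegral.integral_eq_sub_of_hasDerivAt hder hint]
        have : (1:ℝ) - 1 ^ 2 = 0 := by norm_num
        rw [this, zero_pow (by omega : m ≠ 0)]
        norm_num

lemma iteratedDeriv_polyeval (m : ℕ) (p : ℂ[X]) :
    iteratedDeriv m (fun z => p.eval z) = fun z => (derivative^[m] p).eval z := by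
  induction m generalizing p with
  | zero => simp
  | succ m ih =>
    rw [iteratedDeriv_succ', Function.iterate_succ_apply]
    rw [show (deriv fun z => p.eval z) = fun z => (derivative p).eval z from
      funext fun z => Polynomial.deriv p]
    exact ih (derivative p)

lemma iteratedDeriv_poly_sum (m n : ℕ) (c : ℕ → ℂ) (z : ℂ) :
    iteratedDeriv m (fun z : ℂ => ∑ k ∈ Finset.Icc (m + 1) (n + m + 1), c k * z ^ k) z
      = ∑ k ∈ Finset.Icc (m + 1) (n + m + 1), c k * (k.descFactorial m : ℂ) * z ^ (k - m) := by
  have h1 : (fun z : ℂ => ∑ k ∈ Finset.Icc (m + 1) (n + m + 1), c k * z ^ k)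
      = fun z => (∑ k ∈ Finset.Icc (m + 1) (n + m + 1), C (c k) * X ^ k : ℂ[X]).eval z := by
    funext z
    simp [eval_finset_sum]
  rw [h1, iteratedDeriv_polyeval]
  rw [iterate_derivative_sum]
  simp only [iterate_derivative_C_mul, iterate_derivative_X_pow_eq_natCast_mul]
  simp [eval_finset_sum, mul_assoc]

/-- The local Dirichlet integral of order `m` at `λ ∈ 𝕋`. -/
noncomputable def Dlam (lam : ℂ) (m : ℕ) (f : ℂ → ℂ) : ℝ≥0∞ :=
  ENNReal.ofReal (1 / (m.factorial * (m - 1).factorial * Real.pi)) *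
    ∫⁻ z in ball (0 : ℂ) 1,
      ENNReal.ofReal ((1 - ‖z‖ ^ 2) / ‖z - lam‖ ^ 2) *
        ENNReal.ofReal (‖iteratedDeriv m f z‖ ^ 2 * (1 - ‖z‖ ^ 2) ^ (m - 1))

/-- For a polynomial `q(z) = Σ_{k=m+1}^{n+m+1} cₖ zᵏ` and `λ ∈ 𝕋`,
`D_{λ,m}(q) ≤ (n+1) C(n+m+1, m) D_{σ,m}(q)` where
`D_{σ,m}(q) = Σ_{k=m+1}^{n+m+1} |cₖ|² C(k,m)`. -/
theorem stmt10 (m n : ℕ) (hm : 1 ≤ m) (lam : ℂ) (hlam : ‖lam‖ = 1) (c : ℕ → ℂ) :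
    Dlam lam m (fun z => ∑ k ∈ Finset.Icc (m + 1) (n + m + 1), c k * z ^ k) ≤
      ((n : ℝ≥0∞) + 1) * ((n + m + 1).choose m : ℝ≥0∞) *
        ENNReal.ofReal (∑ k ∈ Finset.Icc (m + 1) (n + m + 1), ‖c k‖ ^ 2 * (k.choose m : ℝ)) := by
  have hπ := pi_pos
  set S : ℝ := ∑ k ∈ Finset.Icc (m + 1) (n + m + 1), ‖c k‖ * (k.descFactorial m : ℝ) with hS
  have hS0 : 0 ≤ S := Finset.sum_nonneg fun k _ => by positivity
  -- pointwise bound on the derivative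
  have hD : ∀ z ∈ ball (0:ℂ) 1,
      ‖iteratedDeriv m (fun z : ℂ => ∑ k ∈ Finset.Icc (m + 1) (n + m + 1), c k * z ^ k) z‖
        ≤ S := by
    intro z hz
    rw [iteratedDeriv_poly_sum m n c z]
    refine (norm_sum_le _ _).trans ?_
    apply Finset.sum_le_sum
    intro k _
    rw [norm_mul, norm_mul]
    have hz1 : ‖z‖ ≤ 1 := le_of_lt (by simpa [mem_ball, dist_zero_right] using hz)
    have : ‖z ^ (k - m)‖ ≤ 1 := by
      rw [norm_pow]
      exact pow_le_one₀ (norm_nonneg z) hz1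
    calc ‖c k‖ * ‖(k.descFactorial m : ℂ)‖ * ‖z ^ (k - m)‖
        ≤ ‖c k‖ * ‖(k.descFactorial m : ℂ)‖ * 1 := by
          apply mul_le_mul_of_nonneg_left this (by positivity)
      _ = ‖c k‖ * (k.descFactorial m : ℝ) := by
          rw [mul_one]
          congr 1
          simp
  -- bound the integral
  have hWmeas : Measurable fun z : ℂ => ENNReal.ofReal ((1 - ‖z‖ ^ 2) ^ m / ‖z - lam‖ ^ 2) := by
    apply ENNReal.measurable_ofReal.comp
    apply Measurable.div
    · exact ((measurable_const.sub (measurable_norm.pow measurable_const)).pow measurable_const)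
    · exact ((measurable_id.sub measurable_const).norm.pow measurable_const)
  have hbound : (∫⁻ z in ball (0 : ℂ) 1,
      ENNReal.ofReal ((1 - ‖z‖ ^ 2) / ‖z - lam‖ ^ 2) *
        ENNReal.ofReal
          (‖iteratedDeriv m (fun z : ℂ => ∑ k ∈ Finset.Icc (m + 1) (n + m + 1), c k * z ^ k) z‖ ^ 2
            * (1 - ‖z‖ ^ 2) ^ (m - 1)))
      ≤ ENNReal.ofReal (S ^ 2) * ENNReal.ofReal (π / m) := by
    have hmono : ∀ z ∈ ball (0:ℂ) 1,
        ENNReal.ofReal ((1 - ‖z‖ ^ 2) / ‖z - lam‖ ^ 2) *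
          ENNReal.ofReal
            (‖iteratedDeriv m (fun z : ℂ => ∑ k ∈ Finset.Icc (m + 1) (n + m + 1), c k * z ^ k) z‖ ^ 2
              * (1 - ‖z‖ ^ 2) ^ (m - 1))
          ≤ ENNReal.ofReal (S ^ 2) * ENNReal.ofReal ((1 - ‖z‖ ^ 2) ^ m / ‖z - lam‖ ^ 2) := by
      intro z hz
      have hz1 : ‖z‖ < 1 := by simpa [mem_ball, dist_zero_right] using hz
      have h0 : (0:ℝ) ≤ 1 - ‖z‖ ^ 2 := by nlinarith [norm_nonneg z]
      rw [← ENNReal.ofReal_mul (by positivity), ← ENNReal.ofReal_mul (by positivity)]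
      apply ENNReal.ofReal_le_ofReal
      have hpow : (1 - ‖z‖ ^ 2) ^ m = (1 - ‖z‖ ^ 2) ^ (m - 1) * (1 - ‖z‖ ^ 2) := by
        conv_lhs => rw [← Nat.succ_pred_eq_of_pos hm]
        rw [pow_succ, Nat.pred_eq_sub_one]
      have hD2 : ‖iteratedDeriv m
            (fun z : ℂ => ∑ k ∈ Finset.Icc (m + 1) (n + m + 1), c k * z ^ k) z‖ ^ 2 ≤ S ^ 2 :=
        pow_le_pow_left₀ (norm_nonneg _) (hD z hz) 2
      calc (1 - ‖z‖ ^ 2) / ‖z - lam‖ ^ 2 *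
            (‖iteratedDeriv m
              (fun z : ℂ => ∑ k ∈ Finset.Icc (m + 1) (n + m + 1), c k * z ^ k) z‖ ^ 2
              * (1 - ‖z‖ ^ 2) ^ (m - 1))
          = ‖iteratedDeriv m
              (fun z : ℂ => ∑ k ∈ Finset.Icc (m + 1) (n + m + 1), c k * z ^ k) z‖ ^ 2
              * ((1 - ‖z‖ ^ 2) ^ m / ‖z - lam‖ ^ 2) := by
            rw [hpow]; ring
        _ ≤ S ^ 2 * ((1 - ‖z‖ ^ 2) ^ m / ‖z - lam‖ ^ 2) := by
            apply mul_le_mul_of_nonneg_right hD2 (by positivity)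
    calc (∫⁻ z in ball (0 : ℂ) 1, _) ≤ ∫⁻ z in ball (0:ℂ) 1,
          ENNReal.ofReal (S ^ 2) * ENNReal.ofReal ((1 - ‖z‖ ^ 2) ^ m / ‖z - lam‖ ^ 2) := by
          apply setLIntegral_mono (measurable_const.mul hWmeas) hmono
      _ = ENNReal.ofReal (S ^ 2) *
            ∫⁻ z in ball (0:ℂ) 1, ENNReal.ofReal ((1 - ‖z‖ ^ 2) ^ m / ‖z - lam‖ ^ 2) :=
          lintegral_const_mul' _ _ ENNReal.ofReal_ne_top
      _ ≤ ENNReal.ofReal (S ^ 2) * ENNReal.ofReal (π / m) := by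
          exact mul_le_mul_right (key_integral hlam hm) _
  -- assemble
  unfold Dlam
  calc ENNReal.ofReal (1 / (m.factorial * (m - 1).factorial * Real.pi)) * _
      ≤ ENNReal.ofReal (1 / (m.factorial * (m - 1).factorial * Real.pi)) *
          (ENNReal.ofReal (S ^ 2) * ENNReal.ofReal (π / m)) := mul_le_mul_right hbound _
    _ ≤ ((n : ℝ≥0∞) + 1) * ((n + m + 1).choose m : ℝ≥0∞) *
        ENNReal.ofReal (∑ k ∈ Finset.Icc (m + 1) (n + m + 1), ‖c k‖ ^ 2 * (k.choose m : ℝ)) := by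
      rw [← ENNReal.ofReal_mul (by positivity), ← ENNReal.ofReal_mul (by positivity)]
      have hrhs : ((n : ℝ≥0∞) + 1) * ((n + m + 1).choose m : ℝ≥0∞) *
          ENNReal.ofReal (∑ k ∈ Finset.Icc (m + 1) (n + m + 1), ‖c k‖ ^ 2 * (k.choose m : ℝ))
          = ENNReal.ofReal (((n:ℝ) + 1) * ((n + m + 1).choose m : ℝ) *
              ∑ k ∈ Finset.Icc (m + 1) (n + m + 1), ‖c k‖ ^ 2 * (k.choose m : ℝ)) := by
        rw [ENNReal.ofReal_mul (by positivity), ENNReal.ofReal_mul (by positivity)]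
        congr 1
        · congr 1
          · rw [show ((n:ℝ) + 1) = ((n + 1 : ℕ) : ℝ) by push_cast; ring,
              ENNReal.ofReal_natCast]
            push_cast
            ring
          · rw [ENNReal.ofReal_natCast]
      rw [hrhs]
      apply ENNReal.ofReal_le_ofReal
      -- the real inequality
      have hmpos : 0 < m := hm
      have hf1 : (0:ℝ) < (m.factorial : ℝ) := by exact_mod_cast m.factorial_pos
      have hf2 : (0:ℝ) < ((m-1).factorial : ℝ) := by exact_mod_cast (m-1).factorial_pos
      have hmr : (0:ℝ) < (m:ℝ) := by exact_mod_cast hmpos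
      have hA : (m:ℝ) * ((m-1).factorial : ℝ) = (m.factorial : ℝ) := by
        exact_mod_cast congrArg (Nat.cast (R := ℝ)) (Nat.mul_factorial_pred hmpos.ne')
      have hLHS : 1 / ((m.factorial:ℝ) * ((m-1).factorial:ℝ) * π) * (S ^ 2 * (π / m))
          = S ^ 2 / ((m.factorial:ℝ) * (m.factorial:ℝ)) := by
        field_simp
        linear_combination (-S ^ 2) * hA
      rw [hLHS]
      have hcard : ((Finset.Icc (m + 1) (n + m + 1)).card : ℝ) = (n:ℝ) + 1 := by
        rw [Nat.card_Icc, show n + m + 1 + 1 - (m + 1) = n + 1 from by omega]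
        push_cast
        ring
      have hcs : S ^ 2 ≤ ((n:ℝ) + 1) *
          ∑ k ∈ Finset.Icc (m + 1) (n + m + 1), (‖c k‖ * (k.descFactorial m : ℝ)) ^ 2 := by
        rw [hS, ← hcard]
        exact sq_sum_le_card_mul_sum_sq
      calc S ^ 2 / ((m.factorial:ℝ) * (m.factorial:ℝ))
          ≤ (((n:ℝ) + 1) *
              ∑ k ∈ Finset.Icc (m + 1) (n + m + 1), (‖c k‖ * (k.descFactorial m : ℝ)) ^ 2) /
              ((m.factorial:ℝ) * (m.factorial:ℝ)) := by gcongr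
        _ = ((n:ℝ) + 1) *
              ∑ k ∈ Finset.Icc (m + 1) (n + m + 1),
                (‖c k‖ * (k.descFactorial m : ℝ)) ^ 2 / ((m.factorial:ℝ) * (m.factorial:ℝ)) := by
            rw [mul_div_assoc, Finset.sum_div]
        _ = ((n:ℝ) + 1) *
              ∑ k ∈ Finset.Icc (m + 1) (n + m + 1), ‖c k‖ ^ 2 * ((k.choose m : ℝ)) ^ 2 := by
            congr 1
            apply Finset.sum_congr rfl
            intro k _
            have hdf : ((k.descFactorial m : ℕ) : ℝ) = (m.factorial : ℝ) * (k.choose m : ℝ) := by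
              exact_mod_cast congrArg (Nat.cast (R := ℝ))
                (Nat.descFactorial_eq_factorial_mul_choose k m)
            rw [hdf]
            field_simp
        _ ≤ ((n:ℝ) + 1) * (((n + m + 1).choose m : ℝ) *
              ∑ k ∈ Finset.Icc (m + 1) (n + m + 1), ‖c k‖ ^ 2 * (k.choose m : ℝ)) := by
            apply mul_le_mul_of_nonneg_left ?_ (by positivity)
            rw [Finset.mul_sum]
            apply Finset.sum_le_sum
            intro k hk
            have hkle : k ≤ n + m + 1 := (Finset.mem_Icc.mp hk).2
            have hcle : (k.choose m : ℝ) ≤ ((n + m + 1).choose m : ℝ) := by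
              exact_mod_cast Nat.choose_le_choose m hkle
            have h1 : (0:ℝ) ≤ ‖c k‖ ^ 2 * (k.choose m : ℝ) := by positivity
            calc ‖c k‖ ^ 2 * (k.choose m : ℝ) ^ 2
                = (k.choose m : ℝ) * (‖c k‖ ^ 2 * (k.choose m : ℝ)) := by ring
              _ ≤ ((n + m + 1).choose m : ℝ) * (‖c k‖ ^ 2 * (k.choose m : ℝ)) :=
                  mul_le_mul_of_nonneg_right hcle h1
        _ = ((n:ℝ) + 1) * ((n + m + 1).choose m : ℝ) *
              ∑ k ∈ Finset.Icc (m + 1) (n + m + 1), ‖c k‖ ^ 2 * (k.choose m : ℝ) := by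
            ring
end
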